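/- arXiv:1410.5040 — 2 statements merged into one kernel-verified Lean document; each statement's English description precedes it below -/
import Mathlib

section
/- Let h(ζ,α) = ζ·exp(−ζ²/2) / (α + ∫₀^ζ exp(−t²/2) dt) for ζ > 0, α ≥ 0. Then ∂h/∂ζ = exp(−ζ²/2)/(α + ∫₀^ζ e^{−t²/2} dt)² · f(ζ,α), where f(ζ,α) = (1−ζ²)(α + ∫₀^ζ e^{−t²/2} dt) − ζ e^{−ζ²/2}. In particular, h(·,α) is strictly decreasing on (r(α), ∞) and strictly increasing on (0, r(α)) when r(α) > 0, where r(α) is the unique nonnegative zero of f(·,α). -/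
noncomputable def f (ζ α : ℝ) : ℝ :=
  (1 - ζ ^ 2) * (α + ∫ t in (0:ℝ)..ζ, Real.exp (-t ^ 2 / 2)) - ζ * Real.exp (-ζ ^ 2 / 2)

noncomputable def hfun (ζ α : ℝ) : ℝ :=
  ζ * Real.exp (-ζ ^ 2 / 2) / (α + ∫ t in (0:ℝ)..ζ, Real.exp (-t ^ 2 / 2))

lemma g_cont : Continuous fun t : ℝ => Real.exp (-t ^ 2 / 2) := by
  continuity

lemma I_hasDeriv (ζ : ℝ) :
    HasDerivAt (fun z : ℝ => ∫ t in (0:ℝ)..z, Real.exp (-t ^ 2 / 2))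
      (Real.exp (-ζ ^ 2 / 2)) ζ :=
  (g_cont.integral_hasStrictDerivAt 0 ζ).hasDerivAt

lemma Ipos {ζ : ℝ} (hζ : 0 < ζ) : 0 < ∫ t in (0:ℝ)..ζ, Real.exp (-t ^ 2 / 2) :=
  intervalIntegral.intervalIntegral_pos_of_pos (g_cont.intervalIntegrable 0 ζ)
    (fun x => Real.exp_pos _) hζ

lemma exp_hasDeriv (ζ : ℝ) :
    HasDerivAt (fun z : ℝ => Real.exp (-z ^ 2 / 2)) (Real.exp (-ζ ^ 2 / 2) * (-ζ)) ζ := by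
  have h1 : HasDerivAt (fun z : ℝ => -z ^ 2 / 2) (-ζ) ζ := by
    have := ((hasDerivAt_pow 2 ζ).neg).div_const 2
    refine this.congr_deriv ?_
    ring
  exact h1.exp

lemma f_hasDeriv (α ζ : ℝ) :
    HasDerivAt (fun z => f z α)
      (-2 * ζ * (α + ∫ t in (0:ℝ)..ζ, Real.exp (-t ^ 2 / 2))) ζ := by
  have hD : HasDerivAt (fun z : ℝ => α + ∫ t in (0:ℝ)..z, Real.exp (-t ^ 2 / 2))
      (Real.exp (-ζ ^ 2 / 2)) ζ := (I_hasDeriv ζ).const_add α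
  have h1 : HasDerivAt (fun z : ℝ => 1 - z ^ 2) (-(2 * ζ ^ 1)) ζ :=
    (hasDerivAt_pow 2 ζ).const_sub 1
  have hN : HasDerivAt (fun z : ℝ => z * Real.exp (-z ^ 2 / 2))
      (1 * Real.exp (-ζ ^ 2 / 2) + ζ * (Real.exp (-ζ ^ 2 / 2) * (-ζ))) ζ :=
    (hasDerivAt_id ζ).mul (exp_hasDeriv ζ)
  have := ((h1.mul hD).sub hN)
  refine this.congr_deriv ?_
  ring

lemma f_cont (α : ℝ) : Continuous fun z => f z α :=
  continuous_iff_continuousAt.2 fun z => (f_hasDeriv α z).continuousAt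

lemma f_anti (α : ℝ) (hα : 0 ≤ α) : StrictAntiOn (fun z => f z α) (Set.Ici 0) := by
  apply strictAntiOn_of_deriv_neg (convex_Ici 0) (f_cont α).continuousOn
  intro x hx
  rw [interior_Ici] at hx
  have hx' : 0 < x := hx
  rw [(f_hasDeriv α x).deriv]
  have hD : 0 < α + ∫ t in (0:ℝ)..x, Real.exp (-t ^ 2 / 2) :=
    add_pos_of_nonneg_of_pos hα (Ipos hx')
  have : -2 * x < 0 := by linarith
  exact mul_neg_of_neg_of_pos this hD

lemma hfun_hasDeriv (α : ℝ) (hα : 0 ≤ α) {ζ : ℝ} (hζ : 0 < ζ) :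
    HasDerivAt (fun z => hfun z α)
      (Real.exp (-ζ ^ 2 / 2) / (α + ∫ t in (0:ℝ)..ζ, Real.exp (-t ^ 2 / 2)) ^ 2 * f ζ α) ζ := by
  have hD : HasDerivAt (fun z : ℝ => α + ∫ t in (0:ℝ)..z, Real.exp (-t ^ 2 / 2))
      (Real.exp (-ζ ^ 2 / 2)) ζ := (I_hasDeriv ζ).const_add α
  have hDpos : 0 < α + ∫ t in (0:ℝ)..ζ, Real.exp (-t ^ 2 / 2) :=
    add_pos_of_nonneg_of_pos hα (Ipos hζ)
  have hN : HasDerivAt (fun z : ℝ => z * Real.exp (-z ^ 2 / 2))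
      (1 * Real.exp (-ζ ^ 2 / 2) + ζ * (Real.exp (-ζ ^ 2 / 2) * (-ζ))) ζ :=
    (hasDerivAt_id ζ).mul (exp_hasDeriv ζ)
  have := hN.div hD hDpos.ne'
  refine this.congr_deriv ?_
  unfold f
  field_simp
  ring

theorem stmt5 (α rα : ℝ) (hα : 0 ≤ α) (hr0 : 0 ≤ rα) (hrz : f rα α = 0) :
    (∀ ζ : ℝ, 0 < ζ → HasDerivAt (fun z => hfun z α)
        (Real.exp (-ζ ^ 2 / 2) / (α + ∫ t in (0:ℝ)..ζ, Real.exp (-t ^ 2 / 2)) ^ 2 * f ζ α) ζ) ∧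
    StrictAntiOn (fun z => hfun z α) (Set.Ioi rα) ∧
    (0 < rα → StrictMonoOn (fun z => hfun z α) (Set.Ioo 0 rα)) := by
  refine ⟨fun ζ hζ => hfun_hasDeriv α hα hζ, ?_, ?_⟩
  · apply strictAntiOn_of_deriv_neg (convex_Ioi rα)
    · intro x hx
      have hx0 : 0 < x := lt_of_le_of_lt hr0 hx
      exact (hfun_hasDeriv α hα hx0).continuousAt.continuousWithinAt
    · intro x hx
      rw [interior_Ioi] at hx
      have hx0 : 0 < x := lt_of_le_of_lt hr0 hx
      rw [(hfun_hasDeriv α hα hx0).deriv]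
      have hfneg : f x α < 0 := by
        have := f_anti α hα (Set.mem_Ici.2 hr0) (Set.mem_Ici.2 hx0.le) hx
        simpa [hrz] using this
      have hDpos : 0 < α + ∫ t in (0:ℝ)..x, Real.exp (-t ^ 2 / 2) :=
        add_pos_of_nonneg_of_pos hα (Ipos hx0)
      exact mul_neg_of_pos_of_neg (div_pos (Real.exp_pos _) (pow_pos hDpos 2)) hfneg
  · intro hrpos
    apply strictMonoOn_of_deriv_pos (convex_Ioo 0 rα)
    · intro x hx
      exact (hfun_hasDeriv α hα hx.1).continuousAt.continuousWithinAt
    · intro x hx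
      rw [interior_Ioo] at hx
      rw [(hfun_hasDeriv α hα hx.1).deriv]
      have hfpos : 0 < f x α := by
        have := f_anti α hα (Set.mem_Ici.2 hx.1.le) (Set.mem_Ici.2 hr0) hx.2
        simpa [hrz] using this
      have hDpos : 0 < α + ∫ t in (0:ℝ)..x, Real.exp (-t ^ 2 / 2) :=
        add_pos_of_nonneg_of_pos hα (Ipos hx.1)
      exact mul_pos (div_pos (Real.exp_pos _) (pow_pos hDpos 2)) hfpos
end

section
/- Given α ≥ 0 and β > 0, define g(ζ,α,β) = α·(∫₀^ζ e^{−t²/2} dt + ∫₀^{β/ζ} e^{−t²/2} dt) + (∫₀^ζ e^{−t²/2} dt)·(∫₀^{β/ζ} e^{−t²/2} dt) for ζ > 0. If min{√β, β/r(α)} ≤ ζ < max{√β, β/r(α)} (with β/r(α) interpreted as +∞ when α = 0), then g(·,α,β) is strictly decreasing at ζ, i.e., g is strictly decreasing on that interval. -/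
noncomputable def g (ζ α β : ℝ) : ℝ :=
  α * ((∫ t in (0:ℝ)..ζ, Real.exp (-t ^ 2 / 2)) +
        ∫ t in (0:ℝ)..(β / ζ), Real.exp (-t ^ 2 / 2)) +
  (∫ t in (0:ℝ)..ζ, Real.exp (-t ^ 2 / 2)) * ∫ t in (0:ℝ)..(β / ζ), Real.exp (-t ^ 2 / 2)

noncomputable def Phi6 (x : ℝ) : ℝ := ∫ t in (0:ℝ)..x, Real.exp (-t ^ 2 / 2)

noncomputable def F6 (α x : ℝ) : ℝ := x * Real.exp (-x ^ 2 / 2) / (α + Phi6 x)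


lemma hasDerivAt_Phi6 (x : ℝ) : HasDerivAt Phi6 (Real.exp (-x ^ 2 / 2)) x := by
  have hc : Continuous fun t : ℝ => Real.exp (-t ^ 2 / 2) := by continuity
  exact intervalIntegral.integral_hasDerivAt_right (hc.intervalIntegrable _ _)
    (hc.stronglyMeasurableAtFilter _ _) hc.continuousAt

lemma Phi6_pos {x : ℝ} (hx : 0 < x) : 0 < Phi6 x := by
  have : StrictMono Phi6 := by
    apply strictMono_of_deriv_pos
    intro y
    rw [(hasDerivAt_Phi6 y).deriv]
    positivity
  have h0 : Phi6 0 = 0 := intervalIntegral.integral_same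
  simpa [h0] using this hx

lemma Phi6_nonneg {x : ℝ} (hx : 0 ≤ x) : 0 ≤ Phi6 x := by
  rcases hx.lt_or_eq with h | h
  · exact (Phi6_pos h).le
  · simp [← h, Phi6, intervalIntegral.integral_same]

lemma aPhi6_pos {α x : ℝ} (hα : 0 ≤ α) (hx : 0 ≤ x) (h : 0 < α ∨ 0 < x) :
    0 < α + Phi6 x := by
  rcases h with h | h
  · have := Phi6_nonneg hx; linarith
  · have := Phi6_pos h; linarith

lemma hasDerivAt_phi6 (x : ℝ) :
    HasDerivAt (fun y : ℝ => Real.exp (-y ^ 2 / 2)) (Real.exp (-x ^ 2 / 2) * (-x)) x := by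
  have h1 : HasDerivAt (fun y : ℝ => -y ^ 2 / 2) (-x) x := by
    have := ((hasDerivAt_pow 2 x).neg).div_const 2
    simpa using this.congr_deriv (by ring)
  simpa using h1.exp

lemma hasDerivAt_f (α x : ℝ) :
    HasDerivAt (fun ζ => f ζ α) (-(2 * x) * (α + Phi6 x)) x := by
  have h1 : HasDerivAt (fun ζ : ℝ => 1 - ζ ^ 2) (-(2 * x)) x := by
    simpa using ((hasDerivAt_pow 2 x).const_sub 1).congr_deriv (by ring)
  have h2 : HasDerivAt (fun ζ : ℝ => α + Phi6 ζ) (Real.exp (-x ^ 2 / 2)) x :=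
    (hasDerivAt_Phi6 x).const_add α
  have h3 : HasDerivAt (fun ζ : ℝ => ζ * Real.exp (-ζ ^ 2 / 2))
      (1 * Real.exp (-x ^ 2 / 2) + x * (Real.exp (-x ^ 2 / 2) * (-x))) x :=
    (hasDerivAt_id x).mul (hasDerivAt_phi6 x)
  have := (h1.mul h2).sub h3
  have heq : (fun ζ : ℝ => (1 - ζ ^ 2) * (α + Phi6 ζ) - ζ * Real.exp (-ζ ^ 2 / 2)) =
      fun ζ => f ζ α := by
    funext ζ; simp [f, Phi6]
  rw [← heq]
  exact this.congr_deriv (by ring)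

lemma f_strictAntiOn (α : ℝ) (hα : 0 ≤ α) : StrictAntiOn (fun ζ => f ζ α) (Set.Ici 0) := by
  apply strictAntiOn_of_deriv_neg (convex_Ici 0)
  · exact (Differentiable.continuous fun x => (hasDerivAt_f α x).differentiableAt).continuousOn
  · intro x hx
    rw [interior_Ici] at hx
    rw [(hasDerivAt_f α x).deriv]
    have h1 : 0 < Phi6 x := Phi6_pos hx
    have h2 : 0 < α + Phi6 x := by linarith
    have := mul_pos hx h2
    nlinarith

lemma hasDerivAt_F6 (α : ℝ) {x : ℝ} (h : α + Phi6 x ≠ 0) :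
    HasDerivAt (F6 α) (Real.exp (-x ^ 2 / 2) * f x α / (α + Phi6 x) ^ 2) x := by
  have hnum : HasDerivAt (fun y : ℝ => y * Real.exp (-y ^ 2 / 2))
      (1 * Real.exp (-x ^ 2 / 2) + x * (Real.exp (-x ^ 2 / 2) * (-x))) x :=
    (hasDerivAt_id x).mul (hasDerivAt_phi6 x)
  have hden : HasDerivAt (fun y : ℝ => α + Phi6 y) (Real.exp (-x ^ 2 / 2)) x :=
    (hasDerivAt_Phi6 x).const_add α
  have := hnum.div hden h
  refine this.congr_deriv ?_
  have : f x α = (1 - x ^ 2) * (α + Phi6 x) - x * Real.exp (-x ^ 2 / 2) := by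
    simp [f, Phi6]
  rw [this]; field_simp; ring

lemma f_neg {α rα : ℝ} (hα : 0 ≤ α) (hr0 : 0 ≤ rα) (hrz : f rα α = 0) {x : ℝ}
    (hx : rα < x) : f x α < 0 := by
  have := f_strictAntiOn α hα (Set.mem_Ici.2 hr0) (Set.mem_Ici.2 (hr0.trans hx.le)) hx
  simpa [hrz] using this

lemma f_pos {α rα : ℝ} (hα : 0 ≤ α) (hr0 : 0 ≤ rα) (hrz : f rα α = 0) {x : ℝ}
    (hx0 : 0 ≤ x) (hx : x < rα) : 0 < f x α := by
  have := f_strictAntiOn α hα (Set.mem_Ici.2 hx0) (Set.mem_Ici.2 (hx0.trans hx.le)) hx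
  simpa [hrz] using this

lemma F6_strictAntiOn {α rα : ℝ} (hα : 0 ≤ α) (hr0 : 0 ≤ rα) (hrz : f rα α = 0) :
    StrictAntiOn (F6 α) (Set.Ioi rα) := by
  apply strictAntiOn_of_deriv_neg (convex_Ioi rα)
  · intro x hx
    have hx0 : 0 < x := lt_of_le_of_lt hr0 hx
    have hd : 0 < α + Phi6 x := aPhi6_pos hα hx0.le (Or.inr hx0)
    exact ((hasDerivAt_F6 α hd.ne').continuousAt).continuousWithinAt
  · intro x hx
    rw [interior_Ioi] at hx
    have hx0 : 0 < x := lt_of_le_of_lt hr0 hx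
    have hd : 0 < α + Phi6 x := aPhi6_pos hα hx0.le (Or.inr hx0)
    rw [(hasDerivAt_F6 α hd.ne').deriv]
    exact div_neg_of_neg_of_pos
      (mul_neg_of_pos_of_neg (Real.exp_pos _) (f_neg hα hr0 hrz hx)) (by positivity)

lemma F6_strictMonoOn {α rα : ℝ} (hα : 0 < α) (hr0 : 0 ≤ rα) (hrz : f rα α = 0) :
    StrictMonoOn (F6 α) (Set.Icc 0 rα) := by
  apply strictMonoOn_of_deriv_pos (convex_Icc 0 rα)
  · intro x hx
    have hd : 0 < α + Phi6 x := aPhi6_pos hα.le hx.1 (Or.inl hα)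
    exact ((hasDerivAt_F6 α hd.ne').continuousAt).continuousWithinAt
  · intro x hx
    rw [interior_Icc] at hx
    have hd : 0 < α + Phi6 x := aPhi6_pos hα.le hx.1.le (Or.inl hα)
    rw [(hasDerivAt_F6 α hd.ne').deriv]
    exact div_pos (mul_pos (Real.exp_pos _) (f_pos hα.le hr0 hrz hx.1.le hx.2))
      (by positivity)

lemma hasDerivAt_g (α β : ℝ) {ζ : ℝ} (hζ : ζ ≠ 0) :
    HasDerivAt (fun z => g z α β)
      (Real.exp (-ζ ^ 2 / 2) * (α + Phi6 (β / ζ)) -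
        β / ζ ^ 2 * Real.exp (-(β / ζ) ^ 2 / 2) * (α + Phi6 ζ)) ζ := by
  have hinv : HasDerivAt (fun z : ℝ => β / z) (-(β / ζ ^ 2)) ζ := by
    have := (hasDerivAt_inv hζ).const_mul β
    simp only [div_eq_mul_inv]
    exact this.congr_deriv (by field_simp)
  have hcomp : HasDerivAt (fun z : ℝ => Phi6 (β / z))
      (Real.exp (-(β / ζ) ^ 2 / 2) * -(β / ζ ^ 2)) ζ :=
    (hasDerivAt_Phi6 (β / ζ)).comp ζ hinv
  have h := (((hasDerivAt_Phi6 ζ).add hcomp).const_mul α).add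
    ((hasDerivAt_Phi6 ζ).mul hcomp)
  have heq : (fun z : ℝ => α * (Phi6 z + Phi6 (β / z)) + Phi6 z * Phi6 (β / z)) =
      fun z => g z α β := by
    funext z; simp [g, Phi6]
  rw [← heq]
  exact h.congr_deriv (by ring)

lemma gderiv_neg {α β ζ : ℝ} (hζ : 0 < ζ) (hF : F6 α ζ < F6 α (β / ζ))
    (hd1 : 0 < α + Phi6 ζ) (hd2 : 0 < α + Phi6 (β / ζ)) :
    Real.exp (-ζ ^ 2 / 2) * (α + Phi6 (β / ζ)) -
      β / ζ ^ 2 * Real.exp (-(β / ζ) ^ 2 / 2) * (α + Phi6 ζ) < 0 := by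
  rw [F6, F6, div_lt_div_iff₀ hd1 hd2] at hF
  rw [sub_neg, ← mul_lt_mul_iff_left₀ hζ]
  calc Real.exp (-ζ ^ 2 / 2) * (α + Phi6 (β / ζ)) * ζ
      = ζ * Real.exp (-ζ ^ 2 / 2) * (α + Phi6 (β / ζ)) := by ring
    _ < β / ζ * Real.exp (-(β / ζ) ^ 2 / 2) * (α + Phi6 ζ) := hF
    _ = β / ζ ^ 2 * Real.exp (-(β / ζ) ^ 2 / 2) * (α + Phi6 ζ) * ζ := by
        field_simp

theorem stmt6 (α β rα : ℝ) (hα : 0 ≤ α) (hβ : 0 < β) (hr0 : 0 ≤ rα) (hrz : f rα α = 0) :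
    (α = 0 → StrictAntiOn (fun ζ => g ζ α β) (Set.Ici (Real.sqrt β))) ∧
    (0 < α → StrictAntiOn (fun ζ => g ζ α β)
        (Set.Ico (min (Real.sqrt β) (β / rα)) (max (Real.sqrt β) (β / rα)))) := by
  have hsβ : 0 < Real.sqrt β := Real.sqrt_pos.2 hβ
  have hmul : Real.sqrt β * Real.sqrt β = β := Real.mul_self_sqrt hβ.le
  constructor
  · rintro rfl
    apply strictAntiOn_of_deriv_neg (convex_Ici _)
    · intro x hx
      have hx0 : 0 < x := hsβ.trans_le hx
      exact ((hasDerivAt_g 0 β hx0.ne').continuousAt).continuousWithinAt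
    · intro ζ hζ
      rw [interior_Ici, Set.mem_Ioi] at hζ
      have hζ0 : 0 < ζ := hsβ.trans hζ
      have hη0 : 0 < β / ζ := div_pos hβ hζ0
      have hηlt : β / ζ < Real.sqrt β := by
        rw [div_lt_iff₀ hζ0]; nlinarith
      have hF : F6 0 ζ < F6 0 (β / ζ) :=
        F6_strictAntiOn le_rfl le_rfl (by simp [f]) (Set.mem_Ioi.2 hη0)
          (Set.mem_Ioi.2 hζ0) (hηlt.trans hζ)
      rw [(hasDerivAt_g 0 β hζ0.ne').deriv]
      exact gderiv_neg hζ0 hF (by simpa using (Phi6_pos hζ0))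
        (by simpa using (Phi6_pos hη0))
  · intro hα'
    have hrpos : 0 < rα := by
      rcases hr0.lt_or_eq with h | h
      · exact h
      · exfalso
        have h0 : f 0 α = α := by simp [f]
        rw [← h, h0] at hrz
        exact hα'.ne' hrz
    have hβr : 0 < β / rα := div_pos hβ hrpos
    rcases le_total (Real.sqrt β) (β / rα) with hc | hc
    · rw [min_eq_left hc, max_eq_right hc]
      have hrs : rα ≤ Real.sqrt β := by
        rw [le_div_iff₀ hrpos] at hc; nlinarith
      apply strictAntiOn_of_deriv_neg (convex_Ico _ _)
      · intro x hx
        have hx0 : 0 < x := hsβ.trans_le hx.1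
        exact ((hasDerivAt_g α β hx0.ne').continuousAt).continuousWithinAt
      · intro ζ hζmem
        rw [interior_Ico] at hζmem
        obtain ⟨h1, h2⟩ := hζmem
        have hζ0 : 0 < ζ := hsβ.trans h1
        have hη0 : 0 < β / ζ := div_pos hβ hζ0
        have hηlt : β / ζ < Real.sqrt β := by
          rw [div_lt_iff₀ hζ0]; nlinarith
        have hηgt : rα < β / ζ := by
          rw [lt_div_iff₀ hζ0]
          have := (lt_div_iff₀ hrpos).mp h2
          nlinarith
        have hF : F6 α ζ < F6 α (β / ζ) :=
          F6_strictAntiOn hα hr0 hrz (Set.mem_Ioi.2 hηgt)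
            (Set.mem_Ioi.2 (hrs.trans_lt h1)) (hηlt.trans h1)
        rw [(hasDerivAt_g α β hζ0.ne').deriv]
        exact gderiv_neg hζ0 hF (aPhi6_pos hα hζ0.le (Or.inl hα'))
          (aPhi6_pos hα hη0.le (Or.inl hα'))
    · rw [min_eq_right hc, max_eq_left hc]
      have hrs : Real.sqrt β ≤ rα := by
        rw [div_le_iff₀ hrpos] at hc; nlinarith
      apply strictAntiOn_of_deriv_neg (convex_Ico _ _)
      · intro x hx
        have hx0 : 0 < x := hβr.trans_le hx.1
        exact ((hasDerivAt_g α β hx0.ne').continuousAt).continuousWithinAt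
      · intro ζ hζmem
        rw [interior_Ico] at hζmem
        obtain ⟨h1, h2⟩ := hζmem
        have hζ0 : 0 < ζ := hβr.trans h1
        have hη0 : 0 < β / ζ := div_pos hβ hζ0
        have hηgt : Real.sqrt β < β / ζ := by
          rw [lt_div_iff₀ hζ0]; nlinarith
        have hηlt : β / ζ < rα := by
          rw [div_lt_iff₀ hζ0]
          have := (div_lt_iff₀ hrpos).mp h1
          nlinarith
        have hF : F6 α ζ < F6 α (β / ζ) :=
          F6_strictMonoOn hα' hr0 hrz ⟨hζ0.le, h2.le.trans hrs⟩
            ⟨hη0.le, hηlt.le⟩ (h2.trans hηgt)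
        rw [(hasDerivAt_g α β hζ0.ne').deriv]
        exact gderiv_neg hζ0 hF (aPhi6_pos hα hζ0.le (Or.inl hα'))
          (aPhi6_pos hα hη0.le (Or.inl hα'))
end
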